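/- Let M > 0 and let h : ℝ → ℝ be measurable with |h(x)| ≤ M e^{x} (1+|x|³) for x < 0 and |h(x)| ≤ M e^{−5x/2} (1+|x|³) for x ≥ 0. Let θ ∈ (−1, 5/2) and p ∈ [1,∞). Then there exists a constant C = C(θ,p) > 0, independent of h, M and f, such that for every measurable f with ∫_ℝ |f(x)|^p e^{θx} dx < ∞, the convolution h∗f is defined almost everywhere and (∫_ℝ |(h∗f)(x)|^p e^{θx} dx)^{1/p} ≤ C M (∫_ℝ |f(x)|^p e^{θx} dx)^{1/p}. -/

import Mathlib

open MeasureTheory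
open scoped ENNReal

/-- cube bound: `x ^ 3 ≤ 27 / ε ^ 3 * exp (ε * x)` for `x ≥ 0`. -/
lemma aux_cube_le {ε x : ℝ} (hε : 0 < ε) (hx : 0 ≤ x) :
    x ^ 3 ≤ 27 / ε ^ 3 * Real.exp (ε * x) := by
  have h1 : ε * x / 3 ≤ Real.exp (ε * x / 3) := by
    have := Real.add_one_le_exp (ε * x / 3)
    linarith
  have h2 : (ε * x / 3) ^ 3 ≤ Real.exp (ε * x / 3) ^ 3 :=
    pow_le_pow_left₀ (by positivity) h1 3
  have h3 : Real.exp (ε * x / 3) ^ 3 = Real.exp (ε * x) := by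
    rw [← Real.exp_nat_mul]
    norm_num
    ring_nf
  rw [h3] at h2
  have hkey : 27 / ε ^ 3 * (ε * x / 3) ^ 3 = x ^ 3 := by
    field_simp
    ring
  calc x ^ 3 = 27 / ε ^ 3 * (ε * x / 3) ^ 3 := hkey.symm
    _ ≤ 27 / ε ^ 3 * Real.exp (ε * x) := mul_le_mul_of_nonneg_left h2 (by positivity)

lemma aux_intOn_Ici {a : ℝ} (ha : a < 0) :
    IntegrableOn (fun z => Real.exp (a * z) * (1 + |z| ^ 3)) (Set.Ici 0) := by
  set ε : ℝ := -a / 2 with hεdef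
  have hε : 0 < ε := by simp only [hεdef]; linarith
  have hbase : IntegrableOn (fun z => (1 + 27 / ε ^ 3) * Real.exp (-ε * z)) (Set.Ici (0:ℝ)) := by
    rw [integrableOn_Ici_iff_integrableOn_Ioi]
    exact (exp_neg_integrableOn_Ioi 0 hε).const_mul _
  refine hbase.mono' ?_ ?_
  · exact ((Real.continuous_exp.comp (continuous_const.mul continuous_id)).mul
      (continuous_const.add ((continuous_abs).pow 3))).aestronglyMeasurable
  · rw [ae_restrict_iff' measurableSet_Ici]
    filter_upwards with z hz
    have hz0 : (0:ℝ) ≤ z := hz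
    have habs : |z| = z := abs_of_nonneg hz0
    have h1 : z ^ 3 ≤ 27 / ε ^ 3 * Real.exp (ε * z) := aux_cube_le hε hz0
    have h2 : (1:ℝ) ≤ Real.exp (ε * z) := Real.one_le_exp (by positivity)
    have h3 : Real.exp (a * z) * Real.exp (ε * z) = Real.exp (-ε * z) := by
      rw [← Real.exp_add]
      congr 1
      simp only [hεdef]; ring
    have hepos : (0:ℝ) < Real.exp (a * z) := Real.exp_pos _
    have hnn : (0:ℝ) ≤ Real.exp (a * z) * (1 + |z| ^ 3) := by positivity
    rw [Real.norm_eq_abs, abs_of_nonneg hnn, habs]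
    calc Real.exp (a * z) * (1 + z ^ 3)
        ≤ Real.exp (a * z) * ((1 + 27 / ε ^ 3) * Real.exp (ε * z)) := by
          have : (1 : ℝ) + z ^ 3 ≤ (1 + 27 / ε ^ 3) * Real.exp (ε * z) := by nlinarith
          exact mul_le_mul_of_nonneg_left this hepos.le
      _ = (1 + 27 / ε ^ 3) * (Real.exp (a * z) * Real.exp (ε * z)) := by ring
      _ = (1 + 27 / ε ^ 3) * Real.exp (-ε * z) := by rw [h3]

lemma aux_intOn_Iio {b : ℝ} (hb : 0 < b) :
    IntegrableOn (fun z => Real.exp (b * z) * (1 + |z| ^ 3)) (Set.Iio 0) := by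
  have h1 : IntegrableOn (fun z => Real.exp (-b * z) * (1 + |z| ^ 3)) (Set.Ici 0) :=
    aux_intOn_Ici (by linarith)
  have h2 : Integrable ((Set.Ici (0:ℝ)).indicator
      (fun z => Real.exp (-b * z) * (1 + |z| ^ 3))) :=
    (integrable_indicator_iff measurableSet_Ici).2 h1
  have h3 := h2.comp_neg
  have h4 : (fun z => (Set.Ici (0:ℝ)).indicator
      (fun z => Real.exp (-b * z) * (1 + |z| ^ 3)) (-z))
      = (Set.Iic (0:ℝ)).indicator (fun z => Real.exp (b * z) * (1 + |z| ^ 3)) := by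
    funext z
    by_cases hz : z ≤ 0
    · rw [Set.indicator_of_mem (by simpa using hz), Set.indicator_of_mem (by simpa using hz)]
      rw [abs_neg]
      ring_nf
    · rw [Set.indicator_of_notMem (by simpa using hz),
        Set.indicator_of_notMem (by simpa using hz)]
  rw [h4] at h3
  exact ((integrable_indicator_iff measurableSet_Iic).1 h3).mono_set Set.Iio_subset_Iic_self

/-- Young's inequality for convolution, `L¹ * Lᵖ → Lᵖ`, in `ℝ≥0∞`. -/
lemma aux_young {p : ℝ} (hp : 1 ≤ p) {k φ : ℝ → ℝ≥0∞}
    (hk : Measurable k) (hφ : Measurable φ) (hA : (∫⁻ z, k z) ≠ ⊤) :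
    (∫⁻ x, (∫⁻ y, k (x - y) * φ y) ^ p) ≤ (∫⁻ z, k z) ^ p * ∫⁻ y, (φ y) ^ p := by
  have hp0 : (0:ℝ) < p := lt_of_lt_of_le one_pos hp
  -- translation invariance
  have ht1 : ∀ x : ℝ, (∫⁻ y, k (x - y)) = ∫⁻ z, k z := fun x =>
    (Measure.measurePreserving_sub_left volume x).lintegral_comp hk
  -- swapped double integral
  have hswap : ∀ ψ : ℝ → ℝ≥0∞, Measurable ψ →
      (∫⁻ x, ∫⁻ y, k (x - y) * ψ y) = (∫⁻ z, k z) * ∫⁻ y, ψ y := by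
    intro ψ hψ
    have hm : Measurable (Function.uncurry fun x y => k (x - y) * ψ y) :=
      ((hk.comp (measurable_fst.sub measurable_snd)).mul (hψ.comp measurable_snd))
    rw [lintegral_lintegral_swap hm.aemeasurable]
    have : ∀ y : ℝ, (∫⁻ x, k (x - y) * ψ y) = (∫⁻ z, k z) * ψ y := by
      intro y
      rw [lintegral_mul_const (f := fun x => k (x - y)) _
        (hk.comp (measurable_id.sub measurable_const))]
      congr 1
      exact (measurePreserving_sub_right volume y).lintegral_comp hk
    simp_rw [this]
    rw [lintegral_const_mul _ hψ, mul_comm]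
  rcases eq_or_lt_of_le hp with hp1 | hp1
  · -- p = 1
    subst hp1
    simp only [ENNReal.rpow_one]
    rw [hswap φ hφ]
  -- main case
  set r : ℝ := p / (p - 1) with hrdef
  have hpr : r.HolderConjugate p := by
    rw [Real.holderConjugate_iff]
    constructor
    · rw [hrdef]
      rw [lt_div_iff₀ (by linarith)]
      linarith
    · rw [hrdef]
      field_simp
      ring
  have hr0 : (0:ℝ) < r := hpr.pos
  set A := ∫⁻ z, k z with hAdef
  -- Hölder for each x
  have hstep : ∀ x : ℝ, (∫⁻ y, k (x - y) * φ y) ^ p ≤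
      A ^ ((1/r) * p) * ∫⁻ y, k (x - y) * (φ y) ^ p := by
    intro x
    have hkx : Measurable fun y => k (x - y) := hk.comp (measurable_const.sub measurable_id)
    have hold := ENNReal.lintegral_mul_le_Lp_mul_Lq volume hpr
      ((hkx.pow_const (1/r)).aemeasurable)
      (((hkx.pow_const (1/p)).mul hφ).aemeasurable)
    have hpt : ∀ y : ℝ, k (x - y) ^ (1/r) * (k (x - y) ^ (1/p) * φ y) = k (x - y) * φ y := by
      intro y
      rw [← mul_assoc, ← ENNReal.rpow_add_of_nonneg _ _ (by positivity) (by positivity)]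
      have hone : 1/r + 1/p = 1 := by
        rw [one_div, one_div]
        exact hpr.inv_add_inv_eq_one
      rw [hone, ENNReal.rpow_one]
    have h1 : ∀ y : ℝ, (k (x - y) ^ (1/r)) ^ r = k (x - y) := by
      intro y
      rw [← ENNReal.rpow_mul, one_div_mul_cancel (ne_of_gt hr0), ENNReal.rpow_one]
    have h2 : ∀ y : ℝ, (k (x - y) ^ (1/p) * φ y) ^ p = k (x - y) * (φ y) ^ p := by
      intro y
      rw [ENNReal.mul_rpow_of_nonneg _ _ hp0.le, ← ENNReal.rpow_mul,
        one_div_mul_cancel (ne_of_gt hp0), ENNReal.rpow_one]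
    simp only [Pi.mul_apply] at hold
    simp_rw [hpt, h1, h2] at hold
    rw [ht1 x] at hold
    calc (∫⁻ y, k (x - y) * φ y) ^ p
        ≤ (A ^ (1/r) * (∫⁻ y, k (x - y) * (φ y) ^ p) ^ (1/p)) ^ p :=
          ENNReal.rpow_le_rpow hold hp0.le
      _ = A ^ ((1/r) * p) * ∫⁻ y, k (x - y) * (φ y) ^ p := by
          rw [ENNReal.mul_rpow_of_nonneg _ _ hp0.le, ← ENNReal.rpow_mul, ← ENNReal.rpow_mul,
            one_div_mul_cancel (ne_of_gt hp0), ENNReal.rpow_one]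
  calc (∫⁻ x, (∫⁻ y, k (x - y) * φ y) ^ p)
      ≤ ∫⁻ x, A ^ ((1/r) * p) * ∫⁻ y, k (x - y) * (φ y) ^ p := lintegral_mono hstep
    _ = A ^ ((1/r) * p) * ∫⁻ x, ∫⁻ y, k (x - y) * (φ y) ^ p := by
        rw [lintegral_const_mul]
        exact (((hk.comp (measurable_fst.sub measurable_snd)).mul
          ((hφ.pow_const p).comp measurable_snd)).lintegral_prod_right')
    _ = A ^ ((1/r) * p) * (A * ∫⁻ y, (φ y) ^ p) := by
        rw [hswap _ (hφ.pow_const p)]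
    _ = A ^ p * ∫⁻ y, (φ y) ^ p := by
        rw [← mul_assoc]
        congr 1
        have h1r : (1/r) * p = p - 1 := by
          rw [hrdef]
          field_simp
        rw [h1r]
        rcases eq_or_ne A 0 with hA0 | hA0
        · rw [hA0, ENNReal.zero_rpow_of_pos (by linarith), zero_mul,
            ENNReal.zero_rpow_of_pos hp0]
        · calc A ^ (p - 1) * A = A ^ (p - 1) * A ^ (1:ℝ) := by rw [ENNReal.rpow_one]
            _ = A ^ (p - 1 + 1) := (ENNReal.rpow_add _ _ hA0 hA).symm
            _ = A ^ p := by ring_nf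

theorem stmt15 (θ p : ℝ) (hθ1 : -1 < θ) (hθ2 : θ < 5/2) (hp : 1 ≤ p) :
    ∃ C : ℝ, 0 < C ∧ ∀ M : ℝ, 0 < M → ∀ h : ℝ → ℝ, Measurable h →
      (∀ x : ℝ, x < 0 → |h x| ≤ M * Real.exp x * (1 + |x| ^ 3)) →
      (∀ x : ℝ, 0 ≤ x → |h x| ≤ M * Real.exp (-(5 * x) / 2) * (1 + |x| ^ 3)) →
      ∀ f : ℝ → ℝ, Measurable f →
        (∫⁻ x : ℝ, ENNReal.ofReal (|f x| ^ p * Real.exp (θ * x))) < ⊤ →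
        -- the convolution `h ∗ f` is defined almost everywhere
        (∀ᵐ x : ℝ, Integrable (fun y => h (x - y) * f y)) ∧
        -- the weighted `L^p` bound
        (∫⁻ x : ℝ, ENNReal.ofReal
              (|∫ y, h (x - y) * f y| ^ p * Real.exp (θ * x))) ^ (1 / p) ≤
          ENNReal.ofReal (C * M) *
            (∫⁻ x : ℝ, ENNReal.ofReal (|f x| ^ p * Real.exp (θ * x))) ^ (1 / p) := by
  have hp0 : (0:ℝ) < p := lt_of_lt_of_le one_pos hp
  set q : ℝ := θ / p with hqdef
  have hqp : q * p = θ := div_mul_cancel₀ θ (ne_of_gt hp0)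
  have hq1 : -1 < q := by
    rw [hqdef, lt_div_iff₀ hp0]
    nlinarith
  have hq2 : q < 5/2 := by
    rw [hqdef, div_lt_iff₀ hp0]
    nlinarith
  -- the comparison kernel
  set B : ℝ → ℝ := fun z =>
    (if z < 0 then Real.exp z else Real.exp (-(5 * z) / 2)) * (1 + |z| ^ 3) * Real.exp (q * z)
    with hBdef
  have hBnonneg : ∀ z, 0 ≤ B z := by
    intro z
    rw [hBdef]
    dsimp only
    split <;> positivity
  have hBmeas : Measurable B := by
    apply Measurable.mul
    apply Measurable.mul
    · exact Measurable.ite measurableSet_Iio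
        (Real.measurable_exp.comp measurable_id)
        (Real.measurable_exp.comp (by fun_prop))
    · fun_prop
    · fun_prop
  have hBint : Integrable B := by
    have hIio : IntegrableOn B (Set.Iio 0) := by
      refine ((aux_intOn_Iio (b := 1 + q) (by linarith)).congr_fun ?_ measurableSet_Iio)
      intro z hz
      rw [hBdef]
      dsimp only
      rw [if_pos (show z < 0 from hz), show (1 + q) * z = z + q * z by ring, Real.exp_add]
      ring
    have hIci : IntegrableOn B (Set.Ici 0) := by
      refine ((aux_intOn_Ici (a := q - 5/2) (by linarith)).congr_fun ?_ measurableSet_Ici)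
      intro z hz
      rw [hBdef]
      dsimp only
      rw [if_neg (not_lt.2 (show (0:ℝ) ≤ z from hz)),
        show (q - 5/2) * z = -(5 * z) / 2 + q * z by ring, Real.exp_add]
      ring
    have := hIio.union hIci
    rwa [Set.Iio_union_Ici, integrableOn_univ] at this
  have hJnn : (0:ℝ) ≤ ∫ z, B z := integral_nonneg hBnonneg
  refine ⟨(∫ z, B z) + 1, by linarith, ?_⟩
  set C : ℝ := (∫ z, B z) + 1 with hCdef
  intro M hM h hmeas hb1 hb2 f hf hfin
  -- the exponential-weighted kernel and function
  set k : ℝ → ℝ≥0∞ := fun z => ENNReal.ofReal (|h z| * Real.exp (q * z)) with hkdef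
  set φ : ℝ → ℝ≥0∞ := fun y => ENNReal.ofReal (|f y| * Real.exp (q * y)) with hφdef
  have hkmeas : Measurable k :=
    (hmeas.abs.mul (Real.measurable_exp.comp (by fun_prop))).ennreal_ofReal
  have hφmeas : Measurable φ :=
    (hf.abs.mul (Real.measurable_exp.comp (by fun_prop))).ennreal_ofReal
  -- bound on the L¹ norm of the kernel
  have hk_le : ∀ z, k z ≤ ENNReal.ofReal (M * B z) := by
    intro z
    rw [hkdef]
    apply ENNReal.ofReal_le_ofReal
    rw [hBdef]
    dsimp only
    by_cases hz : z < 0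
    · rw [if_pos hz]
      have := hb1 z hz
      have hepos : (0:ℝ) < Real.exp (q * z) := Real.exp_pos _
      nlinarith [abs_nonneg (h z), abs_nonneg z, pow_nonneg (abs_nonneg z) 3,
        Real.exp_pos z]
    · rw [if_neg hz]
      have := hb2 z (not_lt.1 hz)
      have hepos : (0:ℝ) < Real.exp (q * z) := Real.exp_pos _
      nlinarith [abs_nonneg (h z), pow_nonneg (abs_nonneg z) 3,
        Real.exp_pos (-(5 * z) / 2)]
  have hA_le : (∫⁻ z, k z) ≤ ENNReal.ofReal (C * M) := by
    calc (∫⁻ z, k z) ≤ ∫⁻ z, ENNReal.ofReal (M * B z) := lintegral_mono hk_le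
      _ = ∫⁻ z, ENNReal.ofReal M * ENNReal.ofReal (B z) := by
          simp_rw [ENNReal.ofReal_mul hM.le]
      _ = ENNReal.ofReal M * ∫⁻ z, ENNReal.ofReal (B z) := by
          rw [lintegral_const_mul _ hBmeas.ennreal_ofReal]
      _ = ENNReal.ofReal M * ENNReal.ofReal (∫ z, B z) := by
          rw [← ofReal_integral_eq_lintegral_ofReal hBint (ae_of_all _ hBnonneg)]
      _ ≤ ENNReal.ofReal M * ENNReal.ofReal C := by
          gcongr
          rw [hCdef]; linarith
      _ = ENNReal.ofReal (C * M) := by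
          rw [← ENNReal.ofReal_mul hM.le, mul_comm]
  have hAfin : (∫⁻ z, k z) ≠ ⊤ := by
    exact ne_top_of_le_ne_top ENNReal.ofReal_ne_top hA_le
  -- identify ∫⁻ φ^p with the given integral
  have hφp : ∀ y : ℝ, (φ y) ^ p = ENNReal.ofReal (|f y| ^ p * Real.exp (θ * y)) := by
    intro y
    rw [hφdef]
    dsimp only
    rw [ENNReal.ofReal_rpow_of_nonneg (by positivity) hp0.le]
    congr 1
    rw [Real.mul_rpow (abs_nonneg _) (Real.exp_pos _).le, ← Real.exp_mul]
    congr 2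
    rw [← hqp]; ring
  have hS : (∫⁻ y, (φ y) ^ p) = ∫⁻ x, ENNReal.ofReal (|f x| ^ p * Real.exp (θ * x)) := by
    simp_rw [hφp]
  -- Young's inequality
  have hyoung := aux_young hp hkmeas hφmeas hAfin
  set T : ℝ → ℝ≥0∞ := fun x => ∫⁻ y, k (x - y) * φ y with hTdef
  have hTmeas : Measurable T := by
    apply Measurable.lintegral_prod_right'
      (f := fun z : ℝ × ℝ => k (z.1 - z.2) * φ z.2)
    exact (hkmeas.comp (measurable_fst.sub measurable_snd)).mul (hφmeas.comp measurable_snd)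
  have hTp_fin : (∫⁻ x, T x ^ p) < ⊤ := by
    refine lt_of_le_of_lt hyoung ?_
    apply ENNReal.mul_lt_top
    · exact ENNReal.rpow_lt_top_of_nonneg hp0.le hAfin
    · rw [hS]; exact hfin
  have hTfin : ∀ᵐ x, T x < ⊤ := by
    have h1 : ∀ᵐ x, T x ^ p < ⊤ := by
      apply ae_lt_top _ hTp_fin.ne
      exact hTmeas.pow_const p
    filter_upwards [h1] with x hx
    by_contra hc
    rw [not_lt, top_le_iff] at hc
    rw [hc, ENNReal.top_rpow_of_pos hp0] at hx
    exact absurd hx (lt_irrefl _)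
  -- key pointwise identity
  have hkey : ∀ x y : ℝ, k (x - y) * φ y
      = ENNReal.ofReal (Real.exp (q * x)) * ENNReal.ofReal ‖h (x - y) * f y‖ := by
    intro x y
    rw [hkdef, hφdef]
    dsimp only
    rw [← ENNReal.ofReal_mul (by positivity), ← ENNReal.ofReal_mul (Real.exp_pos _).le]
    congr 1
    rw [Real.norm_eq_abs, abs_mul, show q * x = q * (x - y) + q * y by ring, Real.exp_add]
    ring
  have hTeq : ∀ x : ℝ, T x = ENNReal.ofReal (Real.exp (q * x)) *
      ∫⁻ y, ENNReal.ofReal ‖h (x - y) * f y‖ := by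
    intro x
    rw [hTdef]
    dsimp only
    simp_rw [hkey x]
    rw [lintegral_const_mul (f := fun y => ENNReal.ofReal ‖h (x - y) * f y‖) _
      ((hmeas.comp (measurable_const.sub measurable_id)).mul hf).norm.ennreal_ofReal]
  -- a.e. integrability of the convolution integrand
  have hInt : ∀ᵐ x, Integrable (fun y => h (x - y) * f y) := by
    filter_upwards [hTfin] with x hx
    constructor
    · exact ((hmeas.comp (measurable_const.sub measurable_id)).mul hf).aestronglyMeasurable
    · rw [hasFiniteIntegral_iff_norm]
      rw [hTeq x] at hx
      by_contra hc
      rw [not_lt, top_le_iff] at hc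
      rw [hc, ENNReal.mul_top (by simp [Real.exp_pos])] at hx
      exact absurd hx (lt_irrefl _)
  refine ⟨hInt, ?_⟩
  -- pointwise a.e. bound on the convolution
  have hptwise : ∀ᵐ x, ENNReal.ofReal (|∫ y, h (x - y) * f y| ^ p * Real.exp (θ * x))
      ≤ T x ^ p := by
    filter_upwards [hInt] with x hx
    have h1 : ENNReal.ofReal (|∫ y, h (x - y) * f y| * Real.exp (q * x)) ≤ T x := by
      calc ENNReal.ofReal (|∫ y, h (x - y) * f y| * Real.exp (q * x))
          ≤ ENNReal.ofReal ((∫ y, ‖h (x - y) * f y‖) * Real.exp (q * x)) := by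
            apply ENNReal.ofReal_le_ofReal
            refine mul_le_mul_of_nonneg_right ?_ (Real.exp_pos _).le
            rw [← Real.norm_eq_abs]
            exact norm_integral_le_integral_norm _
        _ = ENNReal.ofReal (Real.exp (q * x)) * ENNReal.ofReal (∫ y, ‖h (x - y) * f y‖) := by
            rw [← ENNReal.ofReal_mul (Real.exp_pos _).le, mul_comm]
        _ = ENNReal.ofReal (Real.exp (q * x)) * ∫⁻ y, ENNReal.ofReal ‖h (x - y) * f y‖ := by
            congr 1
            exact ofReal_integral_eq_lintegral_ofReal hx.norm
              (ae_of_all _ fun y => norm_nonneg _)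
        _ = T x := (hTeq x).symm
    calc ENNReal.ofReal (|∫ y, h (x - y) * f y| ^ p * Real.exp (θ * x))
        = (ENNReal.ofReal (|∫ y, h (x - y) * f y| * Real.exp (q * x))) ^ p := by
          rw [ENNReal.ofReal_rpow_of_nonneg (by positivity) hp0.le]
          congr 1
          rw [Real.mul_rpow (abs_nonneg _) (Real.exp_pos _).le, ← Real.exp_mul]
          congr 2
          rw [← hqp]; ring
      _ ≤ T x ^ p := ENNReal.rpow_le_rpow h1 hp0.le
  -- put everything together
  calc (∫⁻ x : ℝ, ENNReal.ofReal
          (|∫ y, h (x - y) * f y| ^ p * Real.exp (θ * x))) ^ (1 / p)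
      ≤ (∫⁻ x, T x ^ p) ^ (1 / p) := by
        apply ENNReal.rpow_le_rpow _ (by positivity)
        exact lintegral_mono_ae hptwise
    _ ≤ ((∫⁻ z, k z) ^ p * ∫⁻ y, (φ y) ^ p) ^ (1 / p) := by
        apply ENNReal.rpow_le_rpow hyoung (by positivity)
    _ = (∫⁻ z, k z) * (∫⁻ y, (φ y) ^ p) ^ (1 / p) := by
        rw [ENNReal.mul_rpow_of_nonneg _ _ (by positivity), ← ENNReal.rpow_mul,
          mul_one_div_cancel (ne_of_gt hp0), ENNReal.rpow_one]
    _ ≤ ENNReal.ofReal (C * M) *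
          (∫⁻ x : ℝ, ENNReal.ofReal (|f x| ^ p * Real.exp (θ * x))) ^ (1 / p) := by
        rw [hS]
        exact mul_le_mul_left hA_le _
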